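/- arXiv:1302.1401 — 2 statements merged into one kernel-verified Lean document; each statement's English description precedes it below -/
import Mathlib

section
/- For every m ≥ 1, the function ε_{m,n}(x,t) satisfies the m-th order heat equation (∂/∂t − Δ_x)^m ε_{m,n}(x,t) = 0 for all t > 0 and x ∈ ℝⁿ. -/
open Real MeasureTheory Filter Topology Set

noncomputable def eps (n m : ℕ) (x : EuclideanSpace ℝ (Fin n)) (t : ℝ) : ℝ :=
  t ^ (m - 1) * (4 * Real.pi * t) ^ (-(n : ℝ) / 2) * Real.exp (-‖x‖ ^ 2 / (4 * t))

noncomputable def lap {n : ℕ} (u : EuclideanSpace ℝ (Fin n) → ℝ)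
    (x : EuclideanSpace ℝ (Fin n)) : ℝ :=
  ∑ i : Fin n, iteratedDeriv 2 (fun s : ℝ => u (x + s • EuclideanSpace.single i 1)) 0

/-- The heat operator ◇ = ∂/∂t − Δ_x. -/
noncomputable def heatOp {n : ℕ} (u : EuclideanSpace ℝ (Fin n) → ℝ → ℝ) :
    EuclideanSpace ℝ (Fin n) → ℝ → ℝ :=
  fun x t => deriv (u x) t - lap (fun y => u y t) x

/-- The adjoint heat operator ◇⁺ = −∂/∂τ − Δ_ξ. -/
noncomputable def adjOp {n : ℕ} (w : EuclideanSpace ℝ (Fin n) → ℝ → ℝ) :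
    EuclideanSpace ℝ (Fin n) → ℝ → ℝ :=
  fun ξ τ => -deriv (w ξ) τ - lap (fun y => w y τ) ξ

/-! ### Auxiliary machinery -/

noncomputable def U (n : ℕ) (a : ℝ) (x : EuclideanSpace ℝ (Fin n)) (t : ℝ) : ℝ :=
  (4 * Real.pi) ^ (-(n : ℝ) / 2) * t ^ (a - n / 2) * Real.exp (-‖x‖ ^ 2 / (4 * t))

lemma hasDerivAt_cU (c : ℝ) (n : ℕ) (a : ℝ) (x : EuclideanSpace ℝ (Fin n)) (t : ℝ)
    (ht : 0 < t) :
    HasDerivAt (fun s => c * U n a x s)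
      (c * U n a x t * ((a - n / 2) / t + ‖x‖ ^ 2 / (4 * t ^ 2))) t := by
  have h1 : HasDerivAt (fun s : ℝ => s ^ (a - n / 2))
      ((a - n / 2) * t ^ (a - n / 2 - 1)) t :=
    Real.hasDerivAt_rpow_const (Or.inl ht.ne')
  have h2 : HasDerivAt (fun s : ℝ => -‖x‖ ^ 2 / (4 * s)) (‖x‖ ^ 2 / (4 * t ^ 2)) t := by
    have h := (hasDerivAt_inv ht.ne').const_mul (-‖x‖ ^ 2 / 4)
    have hfun : (fun s : ℝ => -‖x‖ ^ 2 / (4 * s)) = fun s : ℝ => -‖x‖ ^ 2 / 4 * s⁻¹ := by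
      funext s; ring
    have hval : ‖x‖ ^ 2 / (4 * t ^ 2) = -‖x‖ ^ 2 / 4 * -(t ^ 2)⁻¹ := by
      field_simp
    rw [hfun, hval]; exact h
  have h3 := h2.exp
  have h5 := ((h1.mul h3).const_mul ((4 * Real.pi) ^ (-(n : ℝ) / 2))).const_mul c
  have heq : (fun s => c * U n a x s)
      = fun s : ℝ => c * ((4 * Real.pi) ^ (-(n : ℝ) / 2) *
        (s ^ (a - n / 2) * Real.exp (-‖x‖ ^ 2 / (4 * s)))) := by
    funext s; simp only [U]; ring
  rw [heq]
  refine h5.congr_deriv ?_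
  have hpow : t ^ (a - n / 2 - 1) = t ^ (a - n / 2) / t := by
    rw [Real.rpow_sub ht, Real.rpow_one]
  simp only [U, hpow]
  field_simp

lemma iteratedDeriv2_exp_quad (K α β γ : ℝ) :
    iteratedDeriv 2 (fun s : ℝ => K * Real.exp (α + β * s + γ * s ^ 2)) 0
      = K * Real.exp α * (β ^ 2 + 2 * γ) := by
  have hd : ∀ s : ℝ, HasDerivAt (fun s : ℝ => K * Real.exp (α + β * s + γ * s ^ 2))
      (K * Real.exp (α + β * s + γ * s ^ 2) * (β + 2 * γ * s)) s := by
    intro s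
    have h1 : HasDerivAt (fun s : ℝ => α + β * s + γ * s ^ 2) (β + 2 * γ * s) s := by
      have ha : HasDerivAt (fun _ : ℝ => α) 0 s := hasDerivAt_const _ _
      have hb : HasDerivAt (fun s : ℝ => β * s) β s := by
        simpa using (hasDerivAt_id s).const_mul β
      have hc : HasDerivAt (fun s : ℝ => γ * s ^ 2) (γ * (2 * s)) s := by
        simpa using (hasDerivAt_pow 2 s).const_mul γ
      exact ((ha.add hb).add hc).congr_deriv (by ring)
    have h := h1.exp.const_mul K
    exact h.congr_deriv (by ring)
  have hderiv : deriv (fun s : ℝ => K * Real.exp (α + β * s + γ * s ^ 2))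
      = fun s => K * Real.exp (α + β * s + γ * s ^ 2) * (β + 2 * γ * s) := by
    funext s; exact (hd s).deriv
  rw [show (2 : ℕ) = 1 + 1 from rfl, iteratedDeriv_succ, iteratedDeriv_one, hderiv]
  have hlin : HasDerivAt (fun s : ℝ => β + 2 * γ * s) (2 * γ) 0 := by
    simpa using ((hasDerivAt_id (0 : ℝ)).const_mul (2 * γ)).const_add β
  have h2 := (hd 0).mul hlin
  rw [HasDerivAt.deriv (f := fun s => K * Real.exp (α + β * s + γ * s ^ 2) * (β + 2 * γ * s)) h2]
  simp
  ring

lemma lap_cU (c : ℝ) (n : ℕ) (a : ℝ) (x : EuclideanSpace ℝ (Fin n)) (t : ℝ) (ht : 0 < t) :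
    lap (fun y => c * U n a y t) x
      = c * U n a x t * (‖x‖ ^ 2 / (4 * t ^ 2) - n / (2 * t)) := by
  have hx : ∑ i, x i ^ 2 = ‖x‖ ^ 2 := by
    rw [EuclideanSpace.norm_eq, Real.sq_sqrt (by positivity)]
    simp [sq_abs]
  unfold lap
  have hterm : ∀ i : Fin n,
      iteratedDeriv 2 (fun s : ℝ => c * U n a (x + s • EuclideanSpace.single i 1) t) 0
        = c * U n a x t * (x i ^ 2 / (4 * t ^ 2) - 1 / (2 * t)) := by
    intro i
    have hslice : (fun s : ℝ => c * U n a (x + s • EuclideanSpace.single i 1) t)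
        = fun s : ℝ => (c * ((4 * Real.pi) ^ (-(n : ℝ) / 2) * t ^ (a - n / 2))) *
            Real.exp ((-‖x‖ ^ 2 / (4 * t)) + (-(x i) / (2 * t)) * s
              + (-(1 / (4 * t))) * s ^ 2) := by
      funext s
      have hnorm : ‖x + s • EuclideanSpace.single i (1 : ℝ)‖ ^ 2
          = ‖x‖ ^ 2 + 2 * s * x i + s ^ 2 := by
        rw [norm_add_sq_real, real_inner_smul_right, norm_smul]
        simp [EuclideanSpace.inner_single_right]
        ring
      simp only [U, hnorm]
      rw [show -(‖x‖ ^ 2 + 2 * s * x i + s ^ 2) / (4 * t)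
          = (-‖x‖ ^ 2 / (4 * t)) + (-(x i) / (2 * t)) * s + (-(1 / (4 * t))) * s ^ 2 from by
        ring]
      ring
    rw [hslice, iteratedDeriv2_exp_quad]
    simp only [U]
    ring
  rw [Finset.sum_congr rfl fun i _ => hterm i, ← Finset.mul_sum]
  congr 1
  rw [Finset.sum_sub_distrib, ← Finset.sum_div, hx, Finset.sum_const, Finset.card_univ]
  simp
  ring

lemma heatOp_cU (c : ℝ) (n : ℕ) (a : ℝ) (x : EuclideanSpace ℝ (Fin n)) (t : ℝ) (ht : 0 < t) :
    heatOp (fun y s => c * U n a y s) x t = (c * a) * U n (a - 1) x t := by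
  have hU : U n (a - 1) x t = U n a x t / t := by
    simp only [U]
    rw [show a - 1 - (n : ℝ) / 2 = a - n / 2 - 1 by ring, Real.rpow_sub ht, Real.rpow_one]
    ring
  show deriv ((fun y s => c * U n a y s) x) t - lap (fun y => c * U n a y t) x = _
  rw [(hasDerivAt_cU c n a x t ht).deriv, lap_cU c n a x t ht, hU]
  field_simp
  ring

lemma heatOp_congr {n : ℕ} {u v : EuclideanSpace ℝ (Fin n) → ℝ → ℝ}
    (h : ∀ y s, 0 < s → u y s = v y s) (x : EuclideanSpace ℝ (Fin n)) (t : ℝ) (ht : 0 < t) :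
    heatOp u x t = heatOp v x t := by
  unfold heatOp
  have h1 : deriv (u x) t = deriv (v x) t := by
    apply Filter.EventuallyEq.deriv_eq
    filter_upwards [isOpen_Ioi.mem_nhds ht] with s hs
    exact h x s hs
  have h2 : (fun y => u y t) = fun y => v y t := funext fun y => h y t ht
  rw [h1, h2]

lemma heatOp_iter_congr {n : ℕ} {u v : EuclideanSpace ℝ (Fin n) → ℝ → ℝ}
    (h : ∀ y s, 0 < s → u y s = v y s) (k : ℕ) :
    ∀ x t, 0 < t → (heatOp)^[k] u x t = (heatOp)^[k] v x t := by
  induction k with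
  | zero => exact h
  | succ k ih =>
    intro x t ht
    rw [Function.iterate_succ_apply', Function.iterate_succ_apply']
    exact heatOp_congr ih x t ht

lemma iter_cU (n : ℕ) (c a : ℝ) (k : ℕ) :
    ∀ x t, 0 < t → (heatOp)^[k] (fun y s => c * U n a y s) x t
      = (c * ∏ i ∈ Finset.range k, (a - i)) * U n (a - k) x t := by
  induction k with
  | zero => intro x t ht; simp
  | succ k ih =>
    intro x t ht
    rw [Function.iterate_succ_apply']
    have hcg := heatOp_congr
      (v := fun y s => (c * ∏ i ∈ Finset.range k, (a - i)) * U n (a - k) y s)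
      (fun y s hs => ih y s hs) x t ht
    rw [hcg, heatOp_cU _ n _ x t ht, Finset.prod_range_succ]
    rw [show a - k - 1 = a - ((k : ℕ) + 1 : ℕ) by push_cast; ring]
    push_cast
    ring

lemma eps_eq_U (n m : ℕ) : ∀ (x : EuclideanSpace ℝ (Fin n)) t, 0 < t →
    eps n m x t = 1 * U n ((m - 1 : ℕ) : ℝ) x t := by
  intro x t ht
  simp only [eps, U, one_mul]
  congr 1
  rw [Real.mul_rpow (by positivity) ht.le, ← Real.rpow_natCast t (m - 1),
    show ((m - 1 : ℕ) : ℝ) - (n : ℝ) / 2 = ((m - 1 : ℕ) : ℝ) + (-(n : ℝ) / 2) by ring,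
    Real.rpow_add ht]
  ring

theorem stmt_2 (n m : ℕ) (hm : 1 ≤ m) (x : EuclideanSpace ℝ (Fin n)) (t : ℝ) (ht : 0 < t) :
    (heatOp)^[m] (eps n m) x t = 0 := by
  rw [heatOp_iter_congr (eps_eq_U n m) m x t ht, iter_cU n 1 _ m x t ht]
  have hz : (∏ i ∈ Finset.range m, (((m - 1 : ℕ) : ℝ) - i)) = 0 :=
    Finset.prod_eq_zero (Finset.mem_range.mpr (by omega : m - 1 < m)) (by simp)
  rw [hz]
  ring
end

section
/- For fixed x ∈ ℝⁿ and t, the function (ξ,τ) ↦ ε_{m,n}(x−ξ, t−τ) satisfies (−∂/∂τ − Δ_ξ)^m ε_{m,n}(x−ξ, t−τ) = 0 for all τ < t and ξ ∈ ℝⁿ. -/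
open Real MeasureTheory Filter Topology Set

/-! ### Auxiliary machinery -/

noncomputable def W (n : ℕ) (x : EuclideanSpace ℝ (Fin n)) (t : ℝ) (k : ℕ) :
    EuclideanSpace ℝ (Fin n) → ℝ → ℝ :=
  fun ξ' τ' => (t - τ') ^ k *
    ((4 * Real.pi * (t - τ')) ^ (-(n : ℝ) / 2) * Real.exp (-‖x - ξ'‖ ^ 2 / (4 * (t - τ'))))

lemma normsq {n : ℕ} (y : EuclideanSpace ℝ (Fin n)) : ‖y‖ ^ 2 = ∑ i, (y i) ^ 2 := by
  rw [EuclideanSpace.norm_eq, Real.sq_sqrt (by positivity)]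
  simp [sq_abs]

lemma gauss_deriv (b c : ℝ) (y : ℝ) :
    HasDerivAt (fun s : ℝ => Real.exp (-(b - s) ^ 2 / (4 * c)))
      (Real.exp (-(b - y) ^ 2 / (4 * c)) * ((b - y) / (2 * c))) y := by
  have h1 : HasDerivAt (fun s : ℝ => b - s) (0 - 1) y :=
    (hasDerivAt_const y b).sub (hasDerivAt_id y)
  have h2 := ((h1.fun_pow 2).fun_neg.div_const (4 * c)).exp
  convert h2 using 1
  rcases eq_or_ne c 0 with hc | hc
  · simp [hc]
  · field_simp
    ring

lemma id2_const_mul (a : ℝ) (f : ℝ → ℝ) (y : ℝ) :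
    iteratedDeriv 2 (fun s => a * f s) y = a * iteratedDeriv 2 f y := by
  have h1 : deriv (fun s => a * f s) = fun s => a * deriv f s :=
    funext fun s => deriv_const_mul_field a
  rw [show (2 : ℕ) = 1 + 1 from rfl, iteratedDeriv_succ, iteratedDeriv_one, h1,
    deriv_const_mul_field, iteratedDeriv_succ, iteratedDeriv_one]

lemma gauss_id2 (b c : ℝ) (hc : c ≠ 0) :
    iteratedDeriv 2 (fun s : ℝ => Real.exp (-(b - s) ^ 2 / (4 * c))) 0
      = Real.exp (-b ^ 2 / (4 * c)) * (b ^ 2 / (4 * c ^ 2) - 1 / (2 * c)) := by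
  rw [iteratedDeriv_succ, iteratedDeriv_one]
  have hd : deriv (fun s : ℝ => Real.exp (-(b - s) ^ 2 / (4 * c)))
      = fun y => Real.exp (-(b - y) ^ 2 / (4 * c)) * ((b - y) / (2 * c)) :=
    funext fun y => (gauss_deriv b c y).deriv
  rw [hd]
  have h5 : HasDerivAt (fun y : ℝ => Real.exp (-(b - y) ^ 2 / (4 * c)) * ((b - y) / (2 * c)))
      ((Real.exp (-(b - 0) ^ 2 / (4 * c)) * ((b - 0) / (2 * c))) * ((b - 0) / (2 * c))
        + Real.exp (-(b - 0) ^ 2 / (4 * c)) * ((0 - 1) / (2 * c))) 0 :=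
    (gauss_deriv b c 0).mul (((hasDerivAt_const 0 b).sub (hasDerivAt_id 0)).div_const (2 * c))
  rw [h5.deriv]
  simp only [sub_zero]
  field_simp
  ring

/-- Locality of `adjOp` on the region `τ < t`. -/
lemma adjOp_congr {n : ℕ} {w₁ w₂ : EuclideanSpace ℝ (Fin n) → ℝ → ℝ} {t : ℝ}
    (h : ∀ ξ τ, τ < t → w₁ ξ τ = w₂ ξ τ) {ξ : EuclideanSpace ℝ (Fin n)} {τ : ℝ}
    (hτ : τ < t) : adjOp w₁ ξ τ = adjOp w₂ ξ τ := by
  simp only [adjOp]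
  have hd : deriv (w₁ ξ) τ = deriv (w₂ ξ) τ := by
    apply Filter.EventuallyEq.deriv_eq
    filter_upwards [Iio_mem_nhds hτ] with y hy using h ξ y hy
  have hl : lap (fun y => w₁ y τ) ξ = lap (fun y => w₂ y τ) ξ := by
    simp only [lap]
    refine Finset.sum_congr rfl fun i _ => ?_
    congr 1
    funext s
    exact h _ τ hτ
  rw [hd, hl]

lemma adjOp_iterate_congr {n : ℕ} {t : ℝ} :
    ∀ (k : ℕ) {w₁ w₂ : EuclideanSpace ℝ (Fin n) → ℝ → ℝ},
      (∀ ξ τ, τ < t → w₁ ξ τ = w₂ ξ τ) →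
      ∀ ξ τ, τ < t → (adjOp)^[k] w₁ ξ τ = (adjOp)^[k] w₂ ξ τ
  | 0, w₁, w₂, h, ξ, τ, hτ => h ξ τ hτ
  | (k+1), w₁, w₂, h, ξ, τ, hτ => by
    rw [Function.iterate_succ_apply, Function.iterate_succ_apply]
    exact adjOp_iterate_congr k (fun ξ' τ' hτ' => adjOp_congr h hτ') ξ τ hτ

lemma adjOp_const_mul {n : ℕ} (a : ℝ) (w : EuclideanSpace ℝ (Fin n) → ℝ → ℝ) :
    adjOp (fun ξ τ => a * w ξ τ) = fun ξ τ => a * adjOp w ξ τ := by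
  funext ξ τ
  simp only [adjOp]
  have hd : deriv (fun τ' => a * w ξ τ') τ = a * deriv (w ξ) τ := deriv_const_mul_field a
  have hl : lap (fun y => a * w y τ) ξ = a * lap (fun y => w y τ) ξ := by
    simp only [lap, id2_const_mul, Finset.mul_sum]
  rw [hd, hl]
  ring

lemma adjOp_iterate_const_mul {n : ℕ} (a : ℝ) :
    ∀ (k : ℕ) (w : EuclideanSpace ℝ (Fin n) → ℝ → ℝ),
      (adjOp)^[k] (fun ξ τ => a * w ξ τ) = fun ξ τ => a * (adjOp)^[k] w ξ τ
  | 0, w => rfl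
  | (k+1), w => by
    rw [Function.iterate_succ_apply, Function.iterate_succ_apply, adjOp_const_mul]
    exact adjOp_iterate_const_mul a k (adjOp w)

/-- The key one-step computation. -/
lemma keyL {n : ℕ} (x : EuclideanSpace ℝ (Fin n)) (t : ℝ) (k : ℕ)
    (ξ : EuclideanSpace ℝ (Fin n)) (τ : ℝ) (hτ : τ < t) :
    adjOp (W n x t k) ξ τ = (k : ℝ) * W n x t (k - 1) ξ τ := by
  have hc0 : (0 : ℝ) < t - τ := by linarith
  set c : ℝ := t - τ with hcdef
  have hc : c ≠ 0 := ne_of_gt hc0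
  have hπc : 4 * Real.pi * c ≠ 0 := by positivity
  set r : ℝ := ‖x - ξ‖ ^ 2 with hrdef
  set b : Fin n → ℝ := fun i => x i - ξ i with hbdef
  have hr : r = ∑ i, (b i) ^ 2 := by
    rw [hrdef, normsq]
    refine Finset.sum_congr rfl fun i _ => ?_
    simp [hbdef]
  -- time derivative
  have hpow := hasDerivAt_pow k c
  have hrpow := ((hasDerivAt_id c).const_mul (4 * Real.pi)).rpow_const
      (p := -(n : ℝ) / 2) (Or.inl hπc)
  have hinner := (hasDerivAt_const c (-r)).div ((hasDerivAt_id c).const_mul 4)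
      (by simpa using (by positivity : (4 : ℝ) * c ≠ 0))
  have hexp := hinner.exp
  have htotal := hpow.mul (hrpow.mul hexp)
  have hsub : HasDerivAt (fun τ' : ℝ => t - τ') (0 - 1) τ :=
    (hasDerivAt_const τ t).sub (hasDerivAt_id τ)
  have hcomp := htotal.comp τ hsub
  have hDτ : HasDerivAt (W n x t k ξ)
      ((↑k * c ^ (k - 1) * ((4 * Real.pi * c) ^ (-(n : ℝ) / 2) * Real.exp (-r / (4 * c)))
        + c ^ k * ((4 * Real.pi * 1) * (-(n : ℝ) / 2) * (4 * Real.pi * c) ^ (-(n : ℝ) / 2 - 1)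
            * Real.exp (-r / (4 * c))
          + (4 * Real.pi * c) ^ (-(n : ℝ) / 2) * (Real.exp (-r / (4 * c))
            * ((0 * (4 * c) - (-r) * (4 * 1)) / (4 * c) ^ 2)))) * (0 - 1)) τ := hcomp
  -- Laplacian part
  have hlap : lap (fun y => W n x t k y τ) ξ
      = ∑ i : Fin n,
          (c ^ k * ((4 * Real.pi * c) ^ (-(n : ℝ) / 2)
              * Real.exp (-(r - (b i) ^ 2) / (4 * c))))
          * (Real.exp (-(b i) ^ 2 / (4 * c)) * ((b i) ^ 2 / (4 * c ^ 2) - 1 / (2 * c))) := by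
    simp only [lap]
    refine Finset.sum_congr rfl fun i _ => ?_
    have hfun : (fun s : ℝ => W n x t k (ξ + s • EuclideanSpace.single i 1) τ)
        = fun s : ℝ => (c ^ k * ((4 * Real.pi * c) ^ (-(n : ℝ) / 2)
              * Real.exp (-(r - (b i) ^ 2) / (4 * c))))
            * Real.exp (-(b i - s) ^ 2 / (4 * c)) := by
      funext s
      have hnrm : ‖x - (ξ + s • EuclideanSpace.single i 1)‖ ^ 2
          = (r - (b i) ^ 2) + (b i - s) ^ 2 := by
        rw [normsq]
        have hco : ∀ j, ((x - (ξ + s • EuclideanSpace.single i 1) :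
              EuclideanSpace ℝ (Fin n)) j)
            = x j - ξ j - (if j = i then s else 0) := by
          intro j
          simp [EuclideanSpace.single_apply]
          ring
        simp only [hco]
        calc ∑ j, (x j - ξ j - (if j = i then s else 0)) ^ 2
            = ∑ j, ((b j) ^ 2 + (if j = i then ((b i - s) ^ 2 - (b i) ^ 2) else 0)) := by
              refine Finset.sum_congr rfl fun j _ => ?_
              by_cases hj : j = i
              · subst hj
                simp only [eq_self_iff_true, if_true, hbdef]
                ring
              · simp only [if_neg hj, hbdef]
                ring
          _ = (r - (b i) ^ 2) + (b i - s) ^ 2 := by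
              rw [Finset.sum_add_distrib, Finset.sum_ite_eq' Finset.univ i
                (fun _ => (b i - s) ^ 2 - (b i) ^ 2)]
              simp only [Finset.mem_univ, if_pos, ← hr]
              ring
      simp only [W, hnrm, ← hcdef]
      rw [show -((r - b i ^ 2) + (b i - s) ^ 2) / (4 * c)
          = -(r - b i ^ 2) / (4 * c) + -(b i - s) ^ 2 / (4 * c) by ring, Real.exp_add]
      ring
    rw [hfun, id2_const_mul, gauss_id2 _ _ hc]
  have hsum2 : (∑ i : Fin n,
      (c ^ k * ((4 * Real.pi * c) ^ (-(n : ℝ) / 2)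
          * Real.exp (-(r - (b i) ^ 2) / (4 * c))))
        * (Real.exp (-(b i) ^ 2 / (4 * c)) * ((b i) ^ 2 / (4 * c ^ 2) - 1 / (2 * c))))
      = c ^ k * (4 * Real.pi * c) ^ (-(n : ℝ) / 2) * Real.exp (-r / (4 * c)) * (r / (4 * c ^ 2))
        - c ^ k * (4 * Real.pi * c) ^ (-(n : ℝ) / 2) * Real.exp (-r / (4 * c))
            * ((n : ℝ) / (2 * c)) := by
    have key : ∀ i : Fin n,
        (c ^ k * ((4 * Real.pi * c) ^ (-(n : ℝ) / 2)
            * Real.exp (-(r - (b i) ^ 2) / (4 * c))))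
          * (Real.exp (-(b i) ^ 2 / (4 * c)) * ((b i) ^ 2 / (4 * c ^ 2) - 1 / (2 * c)))
        = c ^ k * (4 * Real.pi * c) ^ (-(n : ℝ) / 2) * Real.exp (-r / (4 * c))
            * ((b i) ^ 2 / (4 * c ^ 2))
          - c ^ k * (4 * Real.pi * c) ^ (-(n : ℝ) / 2) * Real.exp (-r / (4 * c))
            * (1 / (2 * c)) := by
      intro i
      have h : Real.exp (-(r - (b i) ^ 2) / (4 * c)) * Real.exp (-(b i) ^ 2 / (4 * c))
          = Real.exp (-r / (4 * c)) := by
        rw [← Real.exp_add]; congr 1; ring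
      calc (c ^ k * ((4 * Real.pi * c) ^ (-(n : ℝ) / 2)
            * Real.exp (-(r - (b i) ^ 2) / (4 * c))))
          * (Real.exp (-(b i) ^ 2 / (4 * c)) * ((b i) ^ 2 / (4 * c ^ 2) - 1 / (2 * c)))
          = c ^ k * (4 * Real.pi * c) ^ (-(n : ℝ) / 2)
            * (Real.exp (-(r - (b i) ^ 2) / (4 * c)) * Real.exp (-(b i) ^ 2 / (4 * c)))
            * ((b i) ^ 2 / (4 * c ^ 2) - 1 / (2 * c)) := by ring
        _ = c ^ k * (4 * Real.pi * c) ^ (-(n : ℝ) / 2) * Real.exp (-r / (4 * c))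
            * ((b i) ^ 2 / (4 * c ^ 2) - 1 / (2 * c)) := by rw [h]
        _ = _ := by ring
    rw [Finset.sum_congr rfl fun i _ => key i, Finset.sum_sub_distrib, ← Finset.mul_sum,
      Finset.sum_const, Finset.card_univ, Fintype.card_fin, nsmul_eq_mul]
    have hs : ∑ i : Fin n, (b i) ^ 2 / (4 * c ^ 2) = r / (4 * c ^ 2) := by
      rw [← Finset.sum_div, ← hr]
    rw [hs]
    ring
  -- conclude
  show -deriv (W n x t k ξ) τ - lap (fun y => W n x t k y τ) ξ = _
  rw [hDτ.deriv, hlap, hsum2]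
  have hW : W n x t (k - 1) ξ τ
      = c ^ (k - 1) * ((4 * Real.pi * c) ^ (-(n : ℝ) / 2) * Real.exp (-r / (4 * c))) := rfl
  rw [hW, Real.rpow_sub_one hπc (-(n : ℝ) / 2)]
  field_simp
  ring

lemma claim {n : ℕ} (x : EuclideanSpace ℝ (Fin n)) (t : ℝ) :
    ∀ (k : ℕ) (ξ : EuclideanSpace ℝ (Fin n)) (τ : ℝ), τ < t →
      (adjOp)^[k + 1] (W n x t k) ξ τ = 0
  | 0, ξ, τ, hτ => by
    rw [Function.iterate_one, keyL x t 0 ξ τ hτ]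
    simp
  | (k+1), ξ, τ, hτ => by
    rw [Function.iterate_succ_apply]
    have h1 : ∀ ξ' τ', τ' < t →
        adjOp (W n x t (k + 1)) ξ' τ' = ((k : ℝ) + 1) * W n x t k ξ' τ' := by
      intro ξ' τ' h
      have := keyL x t (k + 1) ξ' τ' h
      simpa using this
    rw [adjOp_iterate_congr (k + 1) h1 ξ τ hτ,
      adjOp_iterate_const_mul ((k : ℝ) + 1) (k + 1) (W n x t k)]
    simp [claim x t k ξ τ hτ]

theorem stmt_4 (n m : ℕ) (hm : 1 ≤ m) (x : EuclideanSpace ℝ (Fin n)) (t : ℝ)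
    (ξ : EuclideanSpace ℝ (Fin n)) (τ : ℝ) (hτ : τ < t) :
    (adjOp)^[m] (fun ξ' τ' => eps n m (x - ξ') (t - τ')) ξ τ = 0 := by
  obtain ⟨k, rfl⟩ : ∃ k, m = k + 1 := ⟨m - 1, (Nat.succ_pred_eq_of_pos hm).symm⟩
  have hfun : (fun ξ' τ' => eps n (k + 1) (x - ξ') (t - τ')) = W n x t k := by
    funext ξ' τ'
    simp [eps, W, mul_assoc]
  rw [hfun]
  exact claim x t k ξ τ hτ
end
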